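/- Let A be a complex n×n matrix with all eigenvalues of positive real part, λ₁ the minimum of these real parts, m ≥ 0 an integer, α > 0, and T* > E_m(0). If g : [0, ∞) → ℂⁿ is continuous with |g(t)| ≤ C L_m(T* + t)^{−α} for all t ≥ 0, then |∫₀ᵗ e^{−(t−τ)A} g(τ) dτ| = O(L_m(T* + t)^{−α}) as t → ∞. -/

import Mathlib

attribute [local instance] Matrix.linftyOpNormedRing Matrix.linftyOpNormedAlgebra

/-- Iterated logarithm: `Lm 0 t = t`, `Lm (m+1) t = log (Lm m t)`. -/
noncomputable def Lm : ℕ → ℝ → ℝ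
  | 0, t => t
  | n + 1, t => Real.log (Lm n t)

/-- Iterated exponential: `Em 0 t = t`, `Em (m+1) t = exp (Em m t)`. -/
noncomputable def Em : ℕ → ℝ → ℝ
  | 0, t => t
  | n + 1, t => Real.exp (Em n t)

section EmLm
lemma Lm_succ (m : ℕ) (x : ℝ) : Lm (m+1) x = Lm m (Real.log x) := by
  induction m generalizing x with
  | zero => rfl
  | succ k ih => show Real.log (Lm (k+1) x) = Real.log (Lm k (Real.log x)); rw [ih]

lemma Em_succ (m : ℕ) (c : ℝ) : Em (m+1) c = Em m (Real.exp c) := by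
  induction m generalizing c with
  | zero => rfl
  | succ k ih => show Real.exp (Em (k+1) c) = Real.exp (Em k (Real.exp c)); rw [ih]

lemma Lm_Em (m : ℕ) (c : ℝ) : Lm m (Em m c) = c := by
  induction m generalizing c with
  | zero => rfl
  | succ k ih =>
    rw [Lm_succ, Em_succ, ← Em_succ, show Em (k+1) c = Real.exp (Em k c) from rfl,
      Real.log_exp, ih]

lemma Em_strictMono (m : ℕ) : StrictMono (Em m) := by
  induction m with
  | zero => exact fun a b h => h
  | succ k ih => exact fun a b h => by simpa [Em] using Real.exp_lt_exp.2 (ih h)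

lemma Em_zero_nonneg (m : ℕ) : 0 ≤ Em m 0 := by
  induction m with
  | zero => exact le_refl _
  | succ k ih => exact (Real.exp_pos _).le

lemma Em_pos_arg (m : ℕ) {x : ℝ} (hx : Em m 0 < x) : 0 < x :=
  lt_of_le_of_lt (Em_zero_nonneg m) hx

lemma log_gt_of (m : ℕ) {x : ℝ} (hx : Em (m+1) 0 < x) : Em m 0 < Real.log x := by
  have h0 : (0:ℝ) < x := lt_trans (Real.exp_pos _) hx
  have := Real.log_lt_log (Real.exp_pos _) hx
  rwa [Real.log_exp] at this

lemma Lm_pos (m : ℕ) : ∀ {x : ℝ}, Em m 0 < x → 0 < Lm m x := by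
  induction m with
  | zero => exact fun h => h
  | succ k ih => intro x hx; rw [Lm_succ]; exact ih (log_gt_of k hx)

lemma Lm_mono (m : ℕ) : ∀ {x y : ℝ}, Em m 0 < x → x ≤ y → Lm m x ≤ Lm m y := by
  induction m with
  | zero => exact fun _ h => h
  | succ k ih =>
    intro x y hx hxy
    rw [Lm_succ, Lm_succ]
    exact ih (log_gt_of k hx) (Real.log_le_log (Em_pos_arg (k+1) hx) hxy)

lemma Lm_le_self (m : ℕ) : ∀ {x : ℝ}, Em m 0 < x → Lm m x ≤ x := by
  induction m with
  | zero => exact fun _ => le_refl _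
  | succ k ih =>
    intro x hx
    rw [Lm_succ]
    calc Lm k (Real.log x) ≤ Real.log x := ih (log_gt_of k hx)
    _ ≤ x := (Real.log_le_sub_one_of_pos (Em_pos_arg (k+1) hx)).trans (by linarith)

lemma Em_two_ge (m : ℕ) : 2 ≤ Em m 2 := by
  induction m with
  | zero => exact le_refl _
  | succ k ih =>
    have := Real.add_one_le_exp (Em k 2)
    show 2 ≤ Real.exp (Em k 2)
    linarith

lemma Em_zero_lt_two (m : ℕ) : Em m 0 < Em m 2 := Em_strictMono m (by norm_num)

lemma Lm_doubling (m : ℕ) : ∀ {y : ℝ}, Em m 2 ≤ y → Lm m (2*y) ≤ 2 * Lm m y := by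
  induction m with
  | zero => exact fun _ => le_refl _
  | succ k ih =>
    intro y hy
    have hy2 : (2:ℝ) ≤ y := (Em_two_ge (k+1)).trans hy
    have hypos : (0:ℝ) < y := by linarith
    have hlogy : Em k 2 ≤ Real.log y := by
      rw [show Em (k+1) 2 = Real.exp (Em k 2) from rfl] at hy
      have := Real.log_le_log (Real.exp_pos _) hy
      rwa [Real.log_exp] at this
    have hlog2 : Real.log 2 ≤ Real.log y := Real.log_le_log (by norm_num) hy2
    rw [Lm_succ, Lm_succ, Real.log_mul (by norm_num) (ne_of_gt hypos)]
    have hk0 : Em k 0 < Real.log 2 + Real.log y :=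
      lt_of_lt_of_le (lt_of_lt_of_le (Em_zero_lt_two k) hlogy) (by
        have : (0:ℝ) < Real.log 2 := Real.log_pos (by norm_num); linarith)
    calc Lm k (Real.log 2 + Real.log y) ≤ Lm k (2 * Real.log y) :=
          Lm_mono k hk0 (by linarith)
      _ ≤ 2 * Lm k (Real.log y) := ih hlogy

lemma Lm_contOn (m : ℕ) : ContinuousOn (Lm m) (Set.Ioi (Em m 0)) := by
  induction m with
  | zero => exact continuousOn_id
  | succ k ih =>
    have hlog : ContinuousOn Real.log (Set.Ioi (Em (k+1) 0)) :=
      Real.continuousOn_log.mono (fun x hx => ne_of_gt (Em_pos_arg (k+1) hx))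
    exact (ih.comp hlog (fun x hx => log_gt_of k hx)).congr (fun x hx => Lm_succ k x)

lemma rpow_neg_anti {α x y : ℝ} (hα : 0 ≤ α) (hx : 0 < x) (hxy : x ≤ y) :
    y ^ (-α) ≤ x ^ (-α) := by
  rw [Real.rpow_neg hx.le, Real.rpow_neg (hx.trans_le hxy).le]
  exact inv_anti₀ (Real.rpow_pos_of_pos hx α) (Real.rpow_le_rpow hx.le hxy hα)

end EmLm
section Spec
open NormedSpace in
lemma spec_exp (n : ℕ) (A : Matrix (Fin n) (Fin n) ℂ) {z : ℂ}
    (hz : z ∈ spectrum ℂ (exp (-A))) : ∃ μ ∈ spectrum ℂ A, z = Complex.exp (-μ) := by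
  classical
  set B := exp (-A) with hB
  have hcomm : Commute A B := ((Commute.refl A).neg_right).exp_right
  -- eigenvector of B for z
  have hdet : (z • (1 : Matrix (Fin n) (Fin n) ℂ) - B).det = 0 := by
    by_contra h
    exact (spectrum.mem_iff.mp hz) (by
      rw [Algebra.algebraMap_eq_smul_one]
      exact (Matrix.isUnit_iff_isUnit_det _).mpr (isUnit_iff_ne_zero.mpr h))
  obtain ⟨v, hv0, hv⟩ := (Matrix.exists_mulVec_eq_zero_iff).mpr hdet
  set W : Submodule ℂ (Fin n → ℂ) := LinearMap.ker ((z • (1 : Matrix (Fin n) (Fin n) ℂ) - B).mulVecLin) with hW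
  have hvW : v ∈ W := by rw [hW, LinearMap.mem_ker, Matrix.mulVecLin_apply]; exact hv
  have hWinv : ∀ w ∈ W, A.mulVecLin w ∈ W := by
    intro w hw
    have hw' : (z • (1 : Matrix (Fin n) (Fin n) ℂ) - B).mulVec w = 0 := by
      rw [hW, LinearMap.mem_ker, Matrix.mulVecLin_apply] at hw; exact hw
    have hcomm2 : (z • (1 : Matrix (Fin n) (Fin n) ℂ) - B) * A
        = A * (z • (1 : Matrix (Fin n) (Fin n) ℂ) - B) := by
      rw [sub_mul, mul_sub, hcomm.eq, Matrix.smul_mul, Matrix.mul_smul, one_mul, mul_one]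
    simp only [hW, LinearMap.mem_ker, Matrix.mulVecLin_apply]
    rw [Matrix.mulVec_mulVec, hcomm2, ← Matrix.mulVec_mulVec, hw', Matrix.mulVec_zero]
  have : Nontrivial W := ⟨⟨⟨v, hvW⟩, 0, by simpa using hv0⟩⟩
  set f : W →ₗ[ℂ] W := (A.mulVecLin).restrict hWinv with hf
  obtain ⟨μ, hμ⟩ := Module.End.exists_eigenvalue f
  obtain ⟨w', hw'⟩ := hμ.exists_hasEigenvector
  have hfw : f w' = μ • w' := Module.End.mem_eigenspace_iff.mp hw'.1
  set w : Fin n → ℂ := (w' : Fin n → ℂ) with hwdef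
  have hw0 : w ≠ 0 := fun h => hw'.2 (by exact_mod_cast Subtype.ext h)
  have hAw : A.mulVec w = μ • w := by
    have h1 : ((f w' : W) : Fin n → ℂ) = A.mulVec w := by
      rw [hf, LinearMap.restrict_coe_apply]; rfl
    rw [hfw] at h1
    exact h1.symm
  -- B w = z w
  have hBw : B.mulVec w = z • w := by
    have hwW : w ∈ W := w'.2
    have : (z • (1 : Matrix (Fin n) (Fin n) ℂ) - B).mulVec w = 0 := by
      rw [hW, LinearMap.mem_ker, Matrix.mulVecLin_apply] at hwW; exact hwW
    rw [Matrix.sub_mulVec, Matrix.smul_mulVec, Matrix.one_mulVec, sub_eq_zero] at this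
    exact this.symm
  -- B w = exp(-μ) w via series
  have hpow : ∀ k : ℕ, ((-A)^k).mulVec w = ((-μ)^k) • w := by
    intro k
    induction k with
    | zero => simp [Matrix.one_mulVec]
    | succ k ih =>
      rw [pow_succ, ← Matrix.mulVec_mulVec, Matrix.neg_mulVec, hAw, ← neg_smul,
        Matrix.mulVec_smul, ih, smul_smul, pow_succ, mul_comm]
  -- evaluation map
  set φ : Matrix (Fin n) (Fin n) ℂ →L[ℂ] (Fin n → ℂ) :=
    LinearMap.toContinuousLinearMap
      { toFun := fun M : Matrix (Fin n) (Fin n) ℂ => M.mulVec w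
        map_add' := fun M N => Matrix.add_mulVec M N w
        map_smul' := fun c M => Matrix.smul_mulVec c M w } with hφ
  have hφap : ∀ M : Matrix (Fin n) (Fin n) ℂ, φ M = M.mulVec w := fun M => rfl
  have hsum := NormedSpace.expSeries_summable' (𝕂 := ℂ) (-A)
  have hBser : B = ∑' k : ℕ, ((k.factorial)⁻¹ : ℂ) • (-A) ^ k := by
    rw [hB, NormedSpace.exp_eq_tsum ℂ]
  have hφB : B.mulVec w = ∑' k : ℕ, (((k.factorial)⁻¹ : ℂ) * (-μ) ^ k) • w := by
    rw [← hφap, hBser, φ.map_tsum hsum]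
    congr 1; funext k
    rw [map_smul, hφap, hpow, smul_smul]
  have hsumc := NormedSpace.expSeries_summable' (𝕂 := ℂ) (-μ)
  have hsc : Summable (fun k : ℕ => ((k.factorial)⁻¹ : ℂ) * (-μ) ^ k) := by
    simpa [smul_eq_mul] using hsumc
  have hφB2 : B.mulVec w = Complex.exp (-μ) • w := by
    rw [hφB, Summable.tsum_smul_const hsc, Complex.exp_eq_exp_ℂ, NormedSpace.exp_eq_tsum ℂ]
    simp [smul_eq_mul]
  -- z = exp (-μ)
  have hzμ : z = Complex.exp (-μ) := by
    have : (z - Complex.exp (-μ)) • w = 0 := by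
      rw [sub_smul, ← hBw, hφB2, sub_self]
    rcases smul_eq_zero.mp this with h | h
    · exact sub_eq_zero.mp h
    · exact absurd h hw0
  refine ⟨μ, ?_, hzμ⟩
  -- μ ∈ spectrum A
  rw [spectrum.mem_iff]
  intro hunit
  rw [Algebra.algebraMap_eq_smul_one, Matrix.isUnit_iff_isUnit_det, isUnit_iff_ne_zero] at hunit
  apply hunit
  rw [← Matrix.exists_mulVec_eq_zero_iff]
  exact ⟨w, hw0, by rw [Matrix.sub_mulVec, Matrix.smul_mulVec, Matrix.one_mulVec, hAw, sub_self]⟩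

open NormedSpace Filter ENNReal NNReal in
lemma exp_decay (n : ℕ) (A : Matrix (Fin n) (Fin n) ℂ)
    (hA : ∀ μ ∈ spectrum ℂ A, 0 < μ.re) :
    ∃ C₀ γ : ℝ, 0 < C₀ ∧ 0 < γ ∧ ∀ s : ℝ, 0 ≤ s →
      ‖exp ((-s) • A)‖ ≤ C₀ * Real.exp (-γ * s) := by
  classical
  set B : Matrix (Fin n) (Fin n) ℂ := exp (-A) with hBdef
  -- uniform bound on the spectrum of B
  obtain ⟨r, hr1, hr⟩ : ∃ r : ℝ, r < 1 ∧ ∀ z ∈ spectrum ℂ B, ‖z‖₊ ≤ Real.toNNReal r := by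
    rcases Set.eq_empty_or_nonempty (spectrum ℂ A) with he | hne
    · refine ⟨1/2, by norm_num, fun z hz => ?_⟩
      obtain ⟨μ, hμ, -⟩ := spec_exp n A hz
      simp [he] at hμ
    · obtain ⟨μ₀, hμ₀, hmin⟩ := (spectrum.isCompact (𝕜 := ℂ) A).exists_isMinOn hne
        Complex.continuous_re.continuousOn
      refine ⟨Real.exp (-μ₀.re), Real.exp_lt_one_iff.mpr (by simpa using hA μ₀ hμ₀), ?_⟩
      intro z hz
      obtain ⟨μ, hμ, hzval⟩ := spec_exp n A hz
      have hn : ‖z‖ = Real.exp (-μ.re) := by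
        rw [hzval, Complex.norm_exp]; simp
      rw [← norm_toNNReal, hn, Real.toNNReal_le_toNNReal_iff (Real.exp_pos _).le]
      exact Real.exp_le_exp.mpr (by simpa using hmin hμ)
  -- spectral radius < 1
  have hsr : spectralRadius ℂ B < 1 := by
    have hle : spectralRadius ℂ B ≤ ((Real.toNNReal r : ℝ≥0) : ℝ≥0∞) :=
      iSup₂_le fun z hz => ENNReal.coe_le_coe.mpr (hr z hz)
    refine lt_of_le_of_lt hle ?_
    rw [← ENNReal.coe_one, ENNReal.coe_lt_coe]
    rcases le_or_gt r 0 with h | h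
    · simpa [Real.toNNReal_of_nonpos h] using zero_lt_one
    · rw [← Real.toNNReal_one, Real.toNNReal_lt_toNNReal_iff one_pos]; exact hr1
  -- find k with ‖B^k‖ < 1
  obtain ⟨k, hk1, hkn⟩ : ∃ k : ℕ, 1 ≤ k ∧ ‖B ^ k‖ < 1 := by
    have hev := (spectrum.pow_nnnorm_pow_one_div_tendsto_nhds_spectralRadius B).eventually_lt_const hsr
    obtain ⟨k, hk, hk1⟩ := (hev.and (eventually_ge_atTop 1)).exists
    refine ⟨k, hk1, ?_⟩
    by_contra h
    push_neg at h
    have h1 : (1 : ℝ≥0∞) ≤ (‖B ^ k‖₊ : ℝ≥0∞) := by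
      rw [← ENNReal.coe_one, ENNReal.coe_le_coe, ← Real.toNNReal_one, ← norm_toNNReal]
      exact Real.toNNReal_le_toNNReal h
    have h2 : (1 : ℝ≥0∞) ≤ (‖B ^ k‖₊ : ℝ≥0∞) ^ (1 / (k : ℝ)) := by
      calc (1:ℝ≥0∞) = 1 ^ (1/(k:ℝ)) := (ENNReal.one_rpow _).symm
      _ ≤ _ := ENNReal.rpow_le_rpow h1 (by positivity)
    exact absurd hk (not_lt.mpr h2)
  -- constants
  set c : ℝ := max ‖B ^ k‖ (1/2) with hc
  have hc0 : (0:ℝ) < c := lt_of_lt_of_le (by norm_num) (le_max_right _ _)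
  have hc1 : c < 1 := max_lt hkn (by norm_num)
  have hkR : (0:ℝ) < (k:ℝ) := by exact_mod_cast Nat.lt_of_lt_of_le Nat.zero_lt_one hk1
  have hlogc : Real.log c < 0 := Real.log_neg hc0 hc1
  -- bound on a compact time interval
  have hcont : Continuous (fun s : ℝ => exp ((-s) • A)) :=
    exp_continuous.comp ((continuous_neg).smul continuous_const)
  obtain ⟨M, hM⟩ := (isCompact_Icc (a := (0:ℝ)) (b := (k:ℝ))).exists_bound_of_continuousOn
    hcont.continuousOn
  set M' : ℝ := max M 1 with hM'
  have hM'1 : (1:ℝ) ≤ M' := le_max_right _ _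
  have hM'0 : (0:ℝ) < M' := lt_of_lt_of_le one_pos hM'1
  set γ : ℝ := -Real.log c / k with hγ
  have hγ0 : 0 < γ := div_pos (by linarith) hkR
  refine ⟨M' / c, γ, by positivity, hγ0, ?_⟩
  intro s hs
  set j : ℕ := ⌊s / (k:ℝ)⌋₊ with hj
  have hjle : (j:ℝ) * k ≤ s := by
    have := Nat.floor_le (a := s / (k:ℝ)) (by positivity)
    calc (j:ℝ) * k ≤ (s / k) * k := by nlinarith
    _ = s := by field_simp
  have hjlt : s < ((j:ℝ) + 1) * k := by
    have := Nat.lt_floor_add_one (s / (k:ℝ))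
    calc s = (s / k) * k := by field_simp
    _ < ((j:ℝ) + 1) * k := by nlinarith
  set rr : ℝ := s - (j:ℝ) * k with hrr
  have hrr0 : 0 ≤ rr := by simp [hrr]; linarith
  have hrrk : rr ≤ (k:ℝ) := by simp [hrr]; nlinarith
  -- decomposition
  have hsplit : exp ((-s) • A) = exp ((-((j:ℝ) * k)) • A) * exp ((-rr) • A) := by
    rw [← Matrix.exp_add_of_commute _ _ (((Commute.refl A).smul_left _).smul_right _), ← add_smul]
    congr 1
    rw [hrr]; ring_nf
  have hpow : exp ((-((j:ℝ) * k)) • A) = (B ^ k) ^ j := by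
    have h1 : (-((j:ℝ) * k)) • A = ((j * k : ℕ) : ℝ) • (-A) := by
      push_cast; rw [smul_neg, ← neg_smul]
    rw [h1, Nat.cast_smul_eq_nsmul, Matrix.exp_nsmul, hBdef, mul_comm j k, pow_mul]
  have hMrr : ‖exp ((-rr) • A)‖ ≤ M' :=
    le_trans (hM _ (Set.mem_Icc.mpr ⟨hrr0, hrrk⟩)) (le_max_left _ _)
  have hnorm : ‖exp ((-s) • A)‖ ≤ c ^ j * M' := by
    rw [hsplit, hpow]
    rcases Nat.eq_zero_or_pos j with h0 | hpos
    · simp only [h0, pow_zero, one_mul]; exact hMrr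
    · calc ‖(B ^ k) ^ j * exp ((-rr) • A)‖ ≤ ‖(B ^ k) ^ j‖ * ‖exp ((-rr) • A)‖ :=
            norm_mul_le _ _
      _ ≤ ‖B ^ k‖ ^ j * M' := by
          refine mul_le_mul (norm_pow_le' _ hpos) hMrr (norm_nonneg _) (by positivity)
      _ ≤ c ^ j * M' :=
          mul_le_mul_of_nonneg_right
            (pow_le_pow_left₀ (norm_nonneg _) (le_max_left _ _) j) hM'0.le
  have hcj : c ^ j ≤ (1 / c) * Real.exp (-γ * s) := by
    have h1 : c ^ j = Real.exp ((j:ℝ) * Real.log c) := by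
      rw [Real.exp_nat_mul, Real.exp_log hc0]
    have h2 : (j:ℝ) * Real.log c ≤ (s / k - 1) * Real.log c := by
      have hj1 : s / k - 1 ≤ (j:ℝ) := by
        rw [sub_le_iff_le_add, div_le_iff₀ hkR]
        nlinarith
      nlinarith [hj1, hlogc]
    have h3 : (s / k - 1) * Real.log c = -γ * s - Real.log c := by
      rw [hγ]; field_simp
    rw [h1]
    calc Real.exp ((j:ℝ) * Real.log c) ≤ Real.exp (-γ * s - Real.log c) := by
          rw [Real.exp_le_exp]; linarith [h2, h3.le, h3.ge]
    _ = (1 / c) * Real.exp (-γ * s) := by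
        rw [Real.exp_sub, Real.exp_log hc0]; ring
  calc ‖exp ((-s) • A)‖ ≤ c ^ j * M' := hnorm
  _ ≤ ((1 / c) * Real.exp (-γ * s)) * M' := by
      refine mul_le_mul_of_nonneg_right hcj (by positivity)
  _ = M' / c * Real.exp (-γ * s) := by ring

end Spec

open Filter intervalIntegral

/-- If all eigenvalues of A have positive real part and |g(t)| ≤ C L_m(T*+t)^{-α},
then |∫₀ᵗ e^{-(t-τ)A} g(τ) dτ| = O(L_m(T*+t)^{-α}) as t → ∞. -/
theorem stmt11 (n : ℕ) (A : Matrix (Fin n) (Fin n) ℂ)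
    (hA : ∀ μ ∈ spectrum ℂ A, 0 < μ.re)
    (m : ℕ) (α : ℝ) (hα : 0 < α) (Tstar : ℝ) (hT : Em m 0 < Tstar)
    (g : ℝ → Fin n → ℂ) (hg : Continuous g)
    (C : ℝ) (hb : ∀ t ≥ (0:ℝ), ‖g t‖ ≤ C * Lm m (Tstar + t) ^ (-α)) :
    ∃ C' T' : ℝ, ∀ t ≥ T',
      ‖∫ τ in (0:ℝ)..t, (NormedSpace.exp ((-(t - τ)) • A)).mulVec (g τ)‖
        ≤ C' * Lm m (Tstar + t) ^ (-α) := by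
  classical
  obtain ⟨C₀, γ, hC₀, hγ0, hdec⟩ := exp_decay n A hA
  have hT0 : 0 ≤ Tstar := le_of_lt (lt_of_le_of_lt (Em_zero_nonneg m) hT)
  have hTpos : ∀ τ : ℝ, 0 ≤ τ → Em m 0 < Tstar + τ := fun τ hτ => lt_of_lt_of_le hT (by linarith)
  have hLpos : ∀ τ : ℝ, 0 ≤ τ → 0 < Lm m (Tstar + τ) := fun τ hτ => Lm_pos m (hTpos τ hτ)
  have hLT : 0 < Lm m Tstar := by simpa using hLpos 0 le_rfl
  have hC : 0 ≤ C := by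
    have h0 := hb 0 le_rfl
    have hw0 : 0 < Lm m (Tstar + 0) ^ (-α) := Real.rpow_pos_of_pos (hLpos 0 le_rfl) _
    nlinarith [norm_nonneg (g 0)]
  set U : ℝ := Lm m Tstar ^ (-α) with hU
  have hU0 : 0 < U := Real.rpow_pos_of_pos hLT _
  -- eventual smallness of the boundary term
  set K₄ : ℝ := C₀ * C * U * 2 ^ α with hK₄def
  have hK₄0 : 0 ≤ K₄ := by positivity
  have htend := tendsto_rpow_mul_exp_neg_mul_atTop_nhds_zero (α + 1) (γ/2) (by positivity)
  have hev0 : ∀ᶠ t : ℝ in atTop, t ^ (α+1) * Real.exp (-(γ/2) * t) ≤ (K₄ + 1)⁻¹ :=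
    htend.eventually_le_const (by positivity)
  have hmain : ∀ᶠ t : ℝ in atTop,
      ‖∫ τ in (0:ℝ)..t, (NormedSpace.exp ((-(t - τ)) • A)).mulVec (g τ)‖
        ≤ (C₀ * C * γ⁻¹ * 2 ^ α + 1) * Lm m (Tstar + t) ^ (-α) := by
    filter_upwards [hev0, eventually_ge_atTop (1:ℝ), eventually_ge_atTop Tstar,
      eventually_ge_atTop (2 * Em m 2)] with t hsm ht1 htT htE
    have ht0 : (0:ℝ) ≤ t := le_trans zero_le_one ht1
    have ht2 : (0:ℝ) ≤ t/2 := by linarith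
    have ht2t : t/2 ≤ t := by linarith
    have hthalf : Em m 2 ≤ Tstar + t/2 := by linarith
    have hwt : 0 < Lm m (Tstar + t) := hLpos t ht0
    have hTt0 : 0 < Tstar + t := lt_of_le_of_lt (Em_zero_nonneg m) (hTpos t ht0)
    -- the small boundary term
    have hsmall : C₀ * C * (t/2) * Real.exp (-γ * (t/2)) * U * (Tstar + t) ^ α ≤ 1 := by
      have e1 : Real.exp (-γ * (t/2)) = Real.exp (-(γ/2) * t) := by ring_nf
      have e2 : (Tstar + t) ^ α ≤ (2*t) ^ α := Real.rpow_le_rpow (by linarith) (by linarith) hα.le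
      have e3 : (2*t) ^ α = 2 ^ α * t ^ α := Real.mul_rpow (by norm_num) (by linarith)
      have e4 : t ^ (α+1) = t ^ α * t := by
        rw [Real.rpow_add (by linarith : (0:ℝ) < t), Real.rpow_one]
      have e5 : (0:ℝ) < Real.exp (-(γ/2) * t) := Real.exp_pos _
      have e6 : (0:ℝ) ≤ t ^ α := Real.rpow_nonneg (by linarith) _
      have h6 : C₀ * C * (t/2) * Real.exp (-γ*(t/2)) * U * (Tstar+t)^α
          = C₀*C*U*((t/2) * (Tstar+t)^α) * Real.exp (-(γ/2)*t) := by rw [e1]; ring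
      have h7 : (t/2) * (Tstar+t)^α ≤ t * (2^α * t^α) := by
        refine mul_le_mul (by linarith) (e2.trans_eq e3) (by positivity) (by linarith)
      calc C₀ * C * (t/2) * Real.exp (-γ*(t/2)) * U * (Tstar+t)^α
          = C₀*C*U*((t/2) * (Tstar+t)^α) * Real.exp (-(γ/2)*t) := h6
        _ ≤ C₀*C*U*(t * (2^α * t^α)) * Real.exp (-(γ/2)*t) := by
            refine mul_le_mul_of_nonneg_right (mul_le_mul_of_nonneg_left h7 (by positivity))
              e5.le
        _ = K₄ * (t ^ (α+1) * Real.exp (-(γ/2)*t)) := by rw [e4, hK₄def]; ring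
        _ ≤ K₄ * (K₄ + 1)⁻¹ := mul_le_mul_of_nonneg_left hsm hK₄0
        _ ≤ 1 := by
            rw [← div_eq_mul_inv]
            exact (div_le_one (by positivity)).mpr (by linarith)
    -- the integrand
    set F : ℝ → (Fin n → ℂ) := fun τ => (NormedSpace.exp ((-(t - τ)) • A)).mulVec (g τ)
      with hF
    have hFcont : Continuous F := by
      apply Continuous.matrix_mulVec _ hg
      exact NormedSpace.exp_continuous.comp
        (((continuous_const.sub continuous_id).neg).smul continuous_const)
    have hsplit : (∫ τ in (0:ℝ)..t, F τ)
        = (∫ τ in (0:ℝ)..(t/2), F τ) + ∫ τ in (t/2)..t, F τ :=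
      (integral_add_adjacent_intervals (hFcont.intervalIntegrable _ _)
        (hFcont.intervalIntegrable _ _)).symm
    -- pointwise bound
    have hptw : ∀ τ ∈ Set.Icc (0:ℝ) t,
        ‖F τ‖ ≤ C₀ * Real.exp (-γ*(t-τ)) * (C * Lm m (Tstar+τ) ^ (-α)) := by
      intro τ hτ
      obtain ⟨hτ0, hτt⟩ := hτ
      calc ‖F τ‖ ≤ ‖NormedSpace.exp ((-(t - τ)) • A)‖ * ‖g τ‖ :=
            Matrix.linfty_opNorm_mulVec _ _
        _ ≤ (C₀ * Real.exp (-γ*(t-τ))) * (C * Lm m (Tstar+τ) ^ (-α)) := by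
            exact mul_le_mul (hdec (t-τ) (by linarith)) (hb τ hτ0) (norm_nonneg _)
              (mul_nonneg hC₀.le (Real.exp_pos _).le)
    -- piece 1
    have h1 : ‖∫ τ in (0:ℝ)..(t/2), F τ‖ ≤ (t/2) * (C₀ * Real.exp (-γ*(t/2)) * (C * U)) := by
      refine le_trans (norm_integral_le_integral_norm ht2) ?_
      have hb1 : ∀ τ ∈ Set.Icc (0:ℝ) (t/2),
          ‖F τ‖ ≤ C₀ * Real.exp (-γ*(t/2)) * (C * U) := by
        intro τ hτ
        obtain ⟨hτ0, hτt⟩ := hτ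
        refine le_trans (hptw τ ⟨hτ0, by linarith⟩) ?_
        have hexp : Real.exp (-γ*(t-τ)) ≤ Real.exp (-γ*(t/2)) := by
          apply Real.exp_le_exp.mpr; nlinarith
        have hLm : Lm m (Tstar+τ) ^ (-α) ≤ U :=
          rpow_neg_anti hα.le hLT (Lm_mono m hT (by linarith))
        have h0exp : (0:ℝ) ≤ Real.exp (-γ*(t-τ)) := (Real.exp_pos _).le
        refine mul_le_mul (mul_le_mul_of_nonneg_left hexp hC₀.le)
          (mul_le_mul_of_nonneg_left hLm hC)
          (mul_nonneg hC (Real.rpow_nonneg (hLpos τ hτ0).le _)) (by positivity)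
      calc (∫ τ in (0:ℝ)..(t/2), ‖F τ‖)
          ≤ ∫ _τ in (0:ℝ)..(t/2), (C₀ * Real.exp (-γ*(t/2)) * (C * U)) :=
            integral_mono_on ht2 (hFcont.norm.intervalIntegrable _ _)
              intervalIntegrable_const hb1
        _ = (t/2) * (C₀ * Real.exp (-γ*(t/2)) * (C*U)) := by
            rw [integral_const]; simp [smul_eq_mul]
    have h1' : (t/2) * (C₀ * Real.exp (-γ*(t/2)) * (C * U)) ≤ Lm m (Tstar+t) ^ (-α) := by
      have h9 : (t/2) * (C₀ * Real.exp (-γ*(t/2)) * (C * U)) ≤ (Tstar+t) ^ (-α) := by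
        rw [Real.rpow_neg hTt0.le, inv_eq_one_div,
          le_div_iff₀ (Real.rpow_pos_of_pos hTt0 α)]
        calc (t/2) * (C₀ * Real.exp (-γ*(t/2)) * (C * U)) * (Tstar+t)^α
            = C₀ * C * (t/2) * Real.exp (-γ * (t/2)) * U * (Tstar + t) ^ α := by ring
          _ ≤ 1 := hsmall
      exact h9.trans (rpow_neg_anti hα.le hwt (Lm_le_self m (hTpos t ht0)))
    -- piece 2
    have hJ : (∫ τ in (t/2)..t, Real.exp (-γ*(t-τ))) ≤ γ⁻¹ := by
      have hI : γ * ∫ τ in (t/2)..t, Real.exp (γ*τ)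
          = Real.exp (γ*t) - Real.exp (γ*(t/2)) := by
        rw [mul_integral_comp_mul_left (a := t/2) (b := t) (f := Real.exp) (c := γ),
          integral_exp]
      have hIv : (∫ τ in (t/2)..t, Real.exp (γ*τ))
          = (Real.exp (γ*t) - Real.exp (γ*(t/2))) / γ := by
        rw [eq_div_iff (ne_of_gt hγ0), mul_comm]; exact hI
      have hcongr : (∫ τ in (t/2)..t, Real.exp (-γ*(t-τ)))
          = ∫ τ in (t/2)..t, Real.exp (-γ*t) * Real.exp (γ*τ) := by
        refine integral_congr fun τ _ => ?_
        rw [← Real.exp_add]; ring_nf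
      rw [hcongr, integral_const_mul, hIv]
      have h2 := Real.exp_pos (γ*(t/2))
      have h3 := Real.exp_pos (-γ*t)
      have h4 : Real.exp (-γ*t) * Real.exp (γ*t) = 1 := by
        rw [← Real.exp_add]; simp
      have h5 : Real.exp (-γ*t) * (Real.exp (γ*t) - Real.exp (γ*(t/2))) ≤ 1 := by nlinarith
      calc Real.exp (-γ*t) * ((Real.exp (γ*t) - Real.exp (γ*(t/2))) / γ)
          = (Real.exp (-γ*t) * (Real.exp (γ*t) - Real.exp (γ*(t/2)))) * γ⁻¹ := by ring
        _ ≤ 1 * γ⁻¹ := mul_le_mul_of_nonneg_right h5 (inv_nonneg.mpr hγ0.le)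
        _ = γ⁻¹ := one_mul _
    have hLhalf : 0 < Lm m (Tstar + t/2) := hLpos (t/2) ht2
    have h2b : ‖∫ τ in (t/2)..t, F τ‖
        ≤ (C₀ * (C * Lm m (Tstar + t/2) ^ (-α))) * γ⁻¹ := by
      refine le_trans (norm_integral_le_integral_norm (by linarith)) ?_
      have hK₂0 : (0:ℝ) ≤ C₀ * (C * Lm m (Tstar + t/2) ^ (-α)) := by positivity
      have hb2 : ∀ τ ∈ Set.Icc (t/2) t,
          ‖F τ‖ ≤ (C₀ * (C * Lm m (Tstar + t/2) ^ (-α))) * Real.exp (-γ*(t-τ)) := by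
        intro τ hτ
        obtain ⟨hτ1, hτ2⟩ := hτ
        refine le_trans (hptw τ ⟨by linarith, hτ2⟩) ?_
        have hLm2 : Lm m (Tstar+τ) ^ (-α) ≤ Lm m (Tstar + t/2) ^ (-α) :=
          rpow_neg_anti hα.le hLhalf (Lm_mono m (hTpos (t/2) ht2) (by linarith))
        calc C₀ * Real.exp (-γ*(t-τ)) * (C * Lm m (Tstar+τ) ^ (-α))
            ≤ C₀ * Real.exp (-γ*(t-τ)) * (C * Lm m (Tstar + t/2) ^ (-α)) := by
              refine mul_le_mul_of_nonneg_left (mul_le_mul_of_nonneg_left hLm2 hC) ?_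
              positivity
          _ = (C₀ * (C * Lm m (Tstar + t/2) ^ (-α))) * Real.exp (-γ*(t-τ)) := by ring
      have hexpcont : Continuous fun τ : ℝ =>
          (C₀ * (C * Lm m (Tstar + t/2) ^ (-α))) * Real.exp (-γ*(t-τ)) := by
        exact continuous_const.mul
          (Real.continuous_exp.comp (continuous_const.mul (continuous_const.sub continuous_id)))
      calc (∫ τ in (t/2)..t, ‖F τ‖)
          ≤ ∫ τ in (t/2)..t, (C₀ * (C * Lm m (Tstar + t/2) ^ (-α)))
              * Real.exp (-γ*(t-τ)) :=
            integral_mono_on (by linarith) (hFcont.norm.intervalIntegrable _ _)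
              (hexpcont.intervalIntegrable _ _) hb2
        _ = (C₀ * (C * Lm m (Tstar + t/2) ^ (-α)))
              * ∫ τ in (t/2)..t, Real.exp (-γ*(t-τ)) := integral_const_mul _ _
        _ ≤ (C₀ * (C * Lm m (Tstar + t/2) ^ (-α))) * γ⁻¹ :=
            mul_le_mul_of_nonneg_left hJ hK₂0
    -- doubling
    have hdb : Lm m (Tstar + t/2) ^ (-α) ≤ 2^α * Lm m (Tstar + t) ^ (-α) := by
      have hd1 : Lm m (Tstar + t) ≤ 2 * Lm m (Tstar + t/2) :=
        (Lm_mono m (hTpos t ht0) (by linarith)).trans (Lm_doubling m hthalf)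
      have hd2 : 0 < Lm m (Tstar + t) / 2 := by linarith
      have hd4 := rpow_neg_anti hα.le hd2 (by linarith : Lm m (Tstar+t)/2 ≤ Lm m (Tstar + t/2))
      refine hd4.trans_eq ?_
      rw [Real.div_rpow hwt.le (by norm_num : (0:ℝ) ≤ 2),
        Real.rpow_neg (by norm_num : (0:ℝ) ≤ 2), div_eq_mul_inv, inv_inv, mul_comm]
    -- combine
    calc ‖∫ τ in (0:ℝ)..t, F τ‖
        = ‖(∫ τ in (0:ℝ)..(t/2), F τ) + ∫ τ in (t/2)..t, F τ‖ := by rw [hsplit]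
      _ ≤ ‖∫ τ in (0:ℝ)..(t/2), F τ‖ + ‖∫ τ in (t/2)..t, F τ‖ := norm_add_le _ _
      _ ≤ Lm m (Tstar+t) ^ (-α) + (C₀ * (C * Lm m (Tstar + t/2) ^ (-α))) * γ⁻¹ :=
          add_le_add (h1.trans h1') h2b
      _ ≤ Lm m (Tstar+t) ^ (-α) + C₀*C*γ⁻¹*(2^α * Lm m (Tstar+t) ^ (-α)) := by
          have h5 : (C₀ * (C * Lm m (Tstar + t/2) ^ (-α))) * γ⁻¹
              = C₀*C*γ⁻¹ * (Lm m (Tstar + t/2) ^ (-α)) := by ring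
          rw [h5]
          exact add_le_add le_rfl (mul_le_mul_of_nonneg_left hdb (by positivity))
      _ = (C₀ * C * γ⁻¹ * 2 ^ α + 1) * Lm m (Tstar+t) ^ (-α) := by ring
  obtain ⟨T', hT'⟩ := eventually_atTop.mp hmain
  exact ⟨C₀ * C * γ⁻¹ * 2 ^ α + 1, T', hT'⟩
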